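/- Let f : [0,1] → ℝ be concave on [0,1] and twice differentiable on (0,1), and suppose there exists c > 0 such that |f''(μ)| ≤ c·(1/μ + 1/(1−μ)) for all μ ∈ (0,1). Then for all p, p̂ ∈ (0,1), the Bregman divergence Breg_{−f}(p̂, p) := f(p) + f'(p)·(p̂ − p) − f(p̂) satisfies Breg_{−f}(p̂, p) ≤ c·KL(p̂, p), where KL(p̂, p) := p̂·log(p̂/p) + (1−p̂)·log((1−p̂)/(1−p)). -/

import Mathlib

/-- **Bregman divergence bounded by KL (Proposition 2).**
If `f : [0,1] → ℝ` is concave, twice differentiable on `(0,1)`, and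
`|f''(μ)| ≤ c·(1/μ + 1/(1−μ))` on `(0,1)`, then for all `p, p̂ ∈ (0,1)`,
`Breg_{−f}(p̂, p) ≤ c·KL(p̂, p)`. -/
theorem breg_le_kl
    (f f' f'' : ℝ → ℝ)
    (hconc : ConcaveOn ℝ (Set.Icc (0:ℝ) 1) f)
    (hd1 : ∀ x ∈ Set.Ioo (0:ℝ) 1, HasDerivAt f (f' x) x)
    (hd2 : ∀ x ∈ Set.Ioo (0:ℝ) 1, HasDerivAt f' (f'' x) x)
    (c : ℝ) (hc : 0 < c)
    (hbound : ∀ μ ∈ Set.Ioo (0:ℝ) 1, |f'' μ| ≤ c * (1 / μ + 1 / (1 - μ)))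
    (p phat : ℝ) (hp : p ∈ Set.Ioo (0:ℝ) 1) (hphat : phat ∈ Set.Ioo (0:ℝ) 1) :
    f p + f' p * (phat - p) - f phat
      ≤ c * (phat * Real.log (phat / p)
              + (1 - phat) * Real.log ((1 - phat) / (1 - p))) := by
  obtain ⟨hp0, hp1⟩ := hp
  obtain ⟨hq0, hq1⟩ := hphat
  set L : ℝ → ℝ := fun x => x * (Real.log x - Real.log p)
      + (1 - x) * (Real.log (1 - x) - Real.log (1 - p)) with hLdef
  set h : ℝ → ℝ := fun x => c * L x + f x with hhdef
  set g : ℝ → ℝ := fun x => c * (Real.log x - Real.log p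
      - Real.log (1 - x) + Real.log (1 - p)) + f' x with hgdef
  -- derivative of h is g on Ioo 0 1
  have hh : ∀ x ∈ Set.Ioo (0:ℝ) 1, HasDerivAt h (g x) x := by
    intro x hx
    have hx0 : (0:ℝ) < x := hx.1
    have hx1 : x < 1 := hx.2
    have hx1' : (0:ℝ) < 1 - x := by linarith
    have d1 : HasDerivAt (fun x : ℝ => x * (Real.log x - Real.log p))
        (1 * (Real.log x - Real.log p) + x * x⁻¹) x := by
      exact (hasDerivAt_id x).mul ((Real.hasDerivAt_log hx0.ne').sub_const _)
    have d2 : HasDerivAt (fun x : ℝ => (1 - x) * (Real.log (1 - x) - Real.log (1 - p)))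
        ((0 - 1) * (Real.log (1 - x) - Real.log (1 - p))
          + (1 - x) * ((0 - 1) / (1 - x))) x := by
      have dl : HasDerivAt (fun x : ℝ => Real.log (1 - x)) ((0 - 1) / (1 - x)) x :=
        (((hasDerivAt_const x (1:ℝ)).sub (hasDerivAt_id x)).log hx1'.ne')
      exact ((hasDerivAt_const x (1:ℝ)).sub (hasDerivAt_id x)).mul (dl.sub_const _)
    have dL : HasDerivAt L
        (Real.log x - Real.log p - Real.log (1 - x) + Real.log (1 - p)) x := by
      have := d1.add d2
      refine this.congr_deriv ?_
      field_simp
      ring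
    exact (dL.const_mul c).add (hd1 x hx)
  -- derivative of g is nonneg on Ioo 0 1
  have hg : ∀ x ∈ Set.Ioo (0:ℝ) 1, HasDerivAt g (c * (1 / x + 1 / (1 - x)) + f'' x) x := by
    intro x hx
    have hx0 : (0:ℝ) < x := hx.1
    have hx1' : (0:ℝ) < 1 - x := by linarith [hx.2]
    have dl1 : HasDerivAt (fun x : ℝ => Real.log x) x⁻¹ x :=
      Real.hasDerivAt_log hx0.ne'
    have dl2 : HasDerivAt (fun x : ℝ => Real.log (1 - x)) ((0 - 1) / (1 - x)) x :=
      (((hasDerivAt_const x (1:ℝ)).sub (hasDerivAt_id x)).log hx1'.ne')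
    have := ((((dl1.sub_const (Real.log p)).sub dl2).add_const
        (Real.log (1 - p))).const_mul c).add (hd2 x hx)
    refine this.congr_deriv ?_
    field_simp
    try ring
  have hg_nonneg : ∀ x ∈ Set.Ioo (0:ℝ) 1, 0 ≤ c * (1 / x + 1 / (1 - x)) + f'' x := by
    intro x hx
    have := hbound x hx
    have := neg_abs_le (f'' x)
    linarith
  -- g monotone on Ioo 0 1
  have hg_mono : MonotoneOn g (Set.Ioo (0:ℝ) 1) := by
    apply monotoneOn_of_deriv_nonneg (convex_Ioo 0 1)
    · exact fun x hx => (hg x hx).continuousAt.continuousWithinAt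
    · intro x hx
      rw [interior_Ioo] at hx
      exact (hg x hx).differentiableAt.differentiableWithinAt
    · intro x hx
      rw [interior_Ioo] at hx
      rw [(hg x hx).deriv]
      exact hg_nonneg x hx
  -- values at p
  have hLp : L p = 0 := by simp [hLdef]
  have hgp : g p = f' p := by simp [hgdef]
  have hIccsub : ∀ a b : ℝ, a ∈ Set.Ioo (0:ℝ) 1 → b ∈ Set.Ioo (0:ℝ) 1 →
      Set.Icc a b ⊆ Set.Ioo (0:ℝ) 1 := by
    intro a b ha hb x hx
    exact ⟨lt_of_lt_of_le ha.1 hx.1, lt_of_le_of_lt hx.2 hb.2⟩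
  -- key inequality
  have key : f p + f' p * (phat - p) ≤ h phat := by
    rcases lt_trichotomy p phat with hlt | heq | hgt
    · obtain ⟨ξ, hξ, hξeq⟩ := exists_hasDerivAt_eq_slope h g hlt
        (fun x hx => (hh x (hIccsub p phat ⟨hp0, hp1⟩ ⟨hq0, hq1⟩ hx)).continuousAt.continuousWithinAt)
        (fun x hx => hh x (hIccsub p phat ⟨hp0, hp1⟩ ⟨hq0, hq1⟩ ⟨le_of_lt hx.1, le_of_lt hx.2⟩))
      have hξmem : ξ ∈ Set.Ioo (0:ℝ) 1 := ⟨lt_trans hp0 hξ.1, lt_trans hξ.2 hq1⟩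
      have hmono := hg_mono ⟨hp0, hp1⟩ hξmem (le_of_lt hξ.1)
      rw [hgp] at hmono
      have hpos : (0:ℝ) < phat - p := by linarith
      have : f' p * (phat - p) ≤ g ξ * (phat - p) :=
        mul_le_mul_of_nonneg_right hmono (le_of_lt hpos)
      rw [hξeq, div_mul_cancel₀ _ hpos.ne'] at this
      have hhp : h p = f p := by simp [hhdef, hLp]
      linarith [this, hhp]
    · subst heq
      simp [hhdef, hLp]
    · obtain ⟨ξ, hξ, hξeq⟩ := exists_hasDerivAt_eq_slope h g hgt
        (fun x hx => (hh x (hIccsub phat p ⟨hq0, hq1⟩ ⟨hp0, hp1⟩ hx)).continuousAt.continuousWithinAt)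
        (fun x hx => hh x (hIccsub phat p ⟨hq0, hq1⟩ ⟨hp0, hp1⟩ ⟨le_of_lt hx.1, le_of_lt hx.2⟩))
      have hξmem : ξ ∈ Set.Ioo (0:ℝ) 1 := ⟨lt_trans hq0 hξ.1, lt_trans hξ.2 hp1⟩
      have hmono := hg_mono hξmem ⟨hp0, hp1⟩ (le_of_lt hξ.2)
      rw [hgp] at hmono
      have hpos : (0:ℝ) < p - phat := by linarith
      have : g ξ * (p - phat) ≤ f' p * (p - phat) :=
        mul_le_mul_of_nonneg_right hmono (le_of_lt hpos)
      rw [hξeq, div_mul_cancel₀ _ hpos.ne'] at this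
      have hhp : h p = f p := by simp [hhdef, hLp]
      linarith [this, hhp]
  have hRHS : c * L phat = c * (phat * Real.log (phat / p)
      + (1 - phat) * Real.log ((1 - phat) / (1 - p))) := by
    rw [hLdef]
    rw [Real.log_div hq0.ne' hp0.ne', Real.log_div (by linarith : (1:ℝ) - phat ≠ 0)
      (by linarith : (1:ℝ) - p ≠ 0)]
  simp only [hhdef] at key
  rw [hRHS] at key
  linarith
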